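/- Let G be a bipartite graph on vertex classes of sizes v and w with e edges, containing no cycle of length 4 or 6. If v ≥ ⌊w^2/4⌋, then e ≤ v + ⌊w^2/4⌋. -/

import Mathlib

open SimpleGraph Finset


lemma c4' {V : Type*} {G : SimpleGraph V} {x y a b : V}
    (hxy : x ≠ y) (hab : a ≠ b) (hxa2 : x ≠ a) (hxb2 : x ≠ b) (hya2 : y ≠ a) (hyb2 : y ≠ b)
    (h1 : G.Adj x a) (h2 : G.Adj y a) (h3 : G.Adj y b) (h4 : G.Adj x b) :
    ∃ c : G.Walk x x, c.IsCycle ∧ c.length = 4 := by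
  refine ⟨.cons h1 (.cons h2.symm (.cons h3 (.cons h4.symm .nil))), ?_, rfl⟩
  simp [Walk.isCycle_def, Walk.isTrail_def, Sym2.eq_iff]
  aesop

lemma c6' {V : Type*} {G : SimpleGraph V} {x y z a b c : V}
    (hxy : x ≠ y) (hxz : x ≠ z) (hyz : y ≠ z) (hab : a ≠ b) (hac : a ≠ c) (hbc : b ≠ c)
    (nxa : x ≠ a) (nxb : x ≠ b) (nxc : x ≠ c) (nya : y ≠ a) (nyb : y ≠ b) (nyc : y ≠ c)
    (nza : z ≠ a) (nzb : z ≠ b) (nzc : z ≠ c)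
    (h1 : G.Adj x a) (h2 : G.Adj z a) (h3 : G.Adj z c) (h4 : G.Adj y c) (h5 : G.Adj y b)
    (h6 : G.Adj x b) :
    ∃ w : G.Walk x x, w.IsCycle ∧ w.length = 6 := by
  refine ⟨.cons h1 (.cons h2.symm (.cons h3 (.cons h4.symm (.cons h5 (.cons h6.symm .nil))))), ?_, rfl⟩
  simp [Walk.isCycle_def, Walk.isTrail_def, Sym2.eq_iff]
  aesop

lemma mantel' {α : Type*} [Fintype α] [DecidableEq α] (H : SimpleGraph α) [DecidableRel H.Adj]
    (hT : ∀ a b c, H.Adj a b → H.Adj a c → ¬ H.Adj b c) :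
    H.edgeFinset.card ≤ Fintype.card α ^ 2 / 4 := by
  classical
  set n := Fintype.card α with hn
  set e := H.edgeFinset.card with he
  -- adjacent vertices have disjoint neighborhoods
  have key1 : ∀ a b, H.Adj a b → H.degree a + H.degree b ≤ n := by
    intro a b hab
    have hd : Disjoint (H.neighborFinset a) (H.neighborFinset b) := by
      rw [Finset.disjoint_left]
      intro c hca hcb
      rw [mem_neighborFinset] at hca hcb
      exact hT a b c hab hca hcb
    calc H.degree a + H.degree b = (H.neighborFinset a ∪ H.neighborFinset b).card := by
            rw [card_union_of_disjoint hd]; rfl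
      _ ≤ (univ : Finset α).card := card_le_card (subset_univ _)
      _ = n := card_univ
  have hNfilter : ∀ a : α, H.neighborFinset a = univ.filter (H.Adj a) := by
    intro a; ext b; simp [mem_neighborFinset]
  have hdeg2 : ∀ b : α, (univ.filter (fun a => H.Adj a b)).card = H.degree b := by
    intro b
    rw [← card_neighborFinset_eq_degree, hNfilter]
    congr 1; ext a; simp [adj_comm]
  have swap : ∑ a : α, ∑ b ∈ H.neighborFinset a, H.degree b = ∑ b : α, H.degree b * H.degree b := by
    simp_rw [hNfilter, Finset.sum_filter]
    rw [Finset.sum_comm]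
    congr 1; ext b
    rw [← Finset.sum_filter, Finset.sum_const, ← hdeg2 b]
    simp [mul_comm]
  have hsum : ∑ a : α, H.degree a = 2 * e := by
    rw [he, ← sum_degrees_eq_twice_card_edges]
  have key2 : ∑ a : α, H.degree a * H.degree a ≤ e * n := by
    have h2 : ∑ a : α, ∑ b ∈ H.neighborFinset a, (H.degree a + H.degree b)
        ≤ ∑ a : α, ∑ _b ∈ H.neighborFinset a, n := by
      refine Finset.sum_le_sum fun a _ => Finset.sum_le_sum fun b hb => ?_
      exact key1 a b ((mem_neighborFinset _ _ _).1 hb)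
    have hrhs : ∑ a : α, ∑ _b ∈ H.neighborFinset a, n = 2 * e * n := by
      simp_rw [Finset.sum_const, smul_eq_mul]
      rw [← Finset.sum_mul]
      simp_rw [card_neighborFinset_eq_degree]
      rw [hsum]
    have hlhs : ∑ a : α, ∑ b ∈ H.neighborFinset a, (H.degree a + H.degree b)
        = ∑ a : α, H.degree a * H.degree a + ∑ a : α, H.degree a * H.degree a := by
      simp_rw [Finset.sum_add_distrib, Finset.sum_const, smul_eq_mul,
        card_neighborFinset_eq_degree]
      rw [swap]
    rw [hlhs, hrhs] at h2
    have h3 : 2 * e * n = (e * n) + (e * n) := by ring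
    omega
  -- Cauchy-Schwarz over ℤ
  have key3 : (2 * e) ^ 2 ≤ n * (e * n) := by
    have cs := sq_sum_le_card_mul_sum_sq (s := (univ : Finset α)) (f := fun a => (H.degree a : ℤ))
    have c1 : ((∑ a : α, H.degree a : ℕ) : ℤ) = ∑ a : α, ((H.degree a : ℤ)) := by push_cast; rfl
    have c2 : ((∑ a : α, H.degree a * H.degree a : ℕ) : ℤ)
        = ∑ a : α, ((H.degree a : ℤ)) ^ 2 := by push_cast; ring_nf
    have : ((2 * e : ℕ) : ℤ) ^ 2 ≤ (n : ℤ) * ((e * n : ℕ) : ℤ) := by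
      calc ((2 * e : ℕ) : ℤ) ^ 2 = (∑ a : α, ((H.degree a : ℤ))) ^ 2 := by
            rw [← c1, hsum]
        _ ≤ (card univ : ℤ) * ∑ a : α, ((H.degree a : ℤ)) ^ 2 := cs
        _ ≤ (n : ℤ) * ((e * n : ℕ) : ℤ) := by
            rw [card_univ, ← c2]
            exact mul_le_mul_of_nonneg_left (by exact_mod_cast key2) (by positivity)
    exact_mod_cast this
  rcases Nat.eq_zero_or_pos e with h0 | hpos
  · omega
  · rw [Nat.le_div_iff_mul_le (by norm_num : 0 < 4)]
    nlinarith [key3]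

section aux
variable {v w : ℕ}

/-- auxiliary graph of "consecutive neighbor pairs" -/
private def auxH (N : Fin v → Finset (Fin w)) : SimpleGraph (Fin w) where
  Adj a b := a ≠ b ∧ ∃ x : Fin v, a ∈ N x ∧ b ∈ N x ∧
    ∀ d ∈ N x, ¬(a < d ∧ d < b) ∧ ¬(b < d ∧ d < a)
  symm := ⟨by
    rintro a b ⟨h1, x, h2, h3, h5⟩
    exact ⟨h1.symm, x, h3, h2, fun d hd => ⟨(h5 d hd).2, (h5 d hd).1⟩⟩⟩
  loopless := ⟨fun a h => h.1 rfl⟩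

private instance (N : Fin v → Finset (Fin w)) : DecidableRel (auxH N).Adj := fun a b =>
  decidable_of_iff (a ≠ b ∧ ∃ x : Fin v, a ∈ N x ∧ b ∈ N x ∧
    ∀ d ∈ N x, ¬(a < d ∧ d < b) ∧ ¬(b < d ∧ d < a)) Iff.rfl

private lemma auxH_adj (N : Fin v → Finset (Fin w)) (a b : Fin w) :
    (auxH N).Adj a b ↔ a ≠ b ∧ ∃ x : Fin v, a ∈ N x ∧ b ∈ N x ∧
      ∀ d ∈ N x, ¬(a < d ∧ d < b) ∧ ¬(b < d ∧ d < a) := Iff.rfl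

end aux

theorem stmt_1 (v w : ℕ) (G : SimpleGraph (Fin v ⊕ Fin w)) [DecidableRel G.Adj]
    (hbip : ∀ x y, G.Adj x y → x.isLeft ≠ y.isLeft)
    (h4 : ∀ (x) (c : G.Walk x x), c.IsCycle → c.length ≠ 4)
    (h6 : ∀ (x) (c : G.Walk x x), c.IsCycle → c.length ≠ 6)
    (e : ℕ) (he : e = G.edgeFinset.card)
    (hvw : v ≥ w^2 / 4) :
    e ≤ v + w^2 / 4 := by
  classical
  set N : Fin v → Finset (Fin w) :=
    fun x => univ.filter (fun a => G.Adj (.inl x) (.inr a)) with hN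
  have memN : ∀ x a, a ∈ N x ↔ G.Adj (.inl x) (.inr a) := by
    intro x a; simp [hN]
  -- no 4-cycles
  have F1 : ∀ (x y : Fin v) (a b : Fin w), x ≠ y → a ≠ b →
      a ∈ N x → b ∈ N x → a ∈ N y → b ∈ N y → False := by
    intro x y a b hxy hab ha hb ha' hb'
    obtain ⟨c, hc, hl⟩ := c4' (G := G) (x := Sum.inl x) (y := Sum.inl y)
      (a := Sum.inr a) (b := Sum.inr b) (by simp [hxy]) (by simp [hab])
      (by simp) (by simp) (by simp) (by simp)
      ((memN _ _).1 ha) ((memN _ _).1 ha') ((memN _ _).1 hb') ((memN _ _).1 hb)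
    exact h4 _ c hc hl
  -- no 6-cycles
  have F2 : ∀ (x y z : Fin v) (a b c : Fin w), x ≠ y → x ≠ z → y ≠ z →
      a ≠ b → a ≠ c → b ≠ c →
      a ∈ N x → b ∈ N x → b ∈ N y → c ∈ N y → c ∈ N z → a ∈ N z → False := by
    intro x y z a b c hxy hxz hyz hab hac hbc h1 h2 h3 h4' h5 h6'
    obtain ⟨cc, hc, hl⟩ := c6' (G := G) (x := Sum.inl x) (y := Sum.inl y) (z := Sum.inl z)
      (a := Sum.inr a) (b := Sum.inr b) (c := Sum.inr c)
      (by simp [hxy]) (by simp [hxz]) (by simp [hyz])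
      (by simp [hab]) (by simp [hac]) (by simp [hbc])
      (by simp) (by simp) (by simp) (by simp) (by simp) (by simp)
      (by simp) (by simp) (by simp)
      ((memN _ _).1 h1) ((memN _ _).1 h6') ((memN _ _).1 h5)
      ((memN _ _).1 h4') ((memN _ _).1 h3) ((memN _ _).1 h2)
    exact h6 _ cc hc hl
  -- edge count as sum of left degrees
  have count : G.edgeFinset.card = ∑ x : Fin v, (N x).card := by
    rw [← Finset.card_sigma]
    refine (Finset.card_bij (fun p _ => s(Sum.inl p.1, Sum.inr p.2)) ?_ ?_ ?_).symm
    · rintro ⟨x, a⟩ hp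
      rw [Finset.mem_sigma] at hp
      rw [SimpleGraph.mem_edgeFinset, SimpleGraph.mem_edgeSet]
      exact (memN x a).1 hp.2
    · rintro ⟨x, a⟩ h1 ⟨y, b⟩ h2 hEq
      simp only [Sym2.eq_iff] at hEq
      rcases hEq with ⟨h, h'⟩ | ⟨h, h'⟩
      · simp_all
      · simp_all
    · intro s hs
      induction s with
      | h u vv =>
        rw [SimpleGraph.mem_edgeFinset, SimpleGraph.mem_edgeSet] at hs
        have hside := hbip _ _ hs
        match u, vv with
        | Sum.inl x, Sum.inl y => simp at hside
        | Sum.inr x, Sum.inr y => simp at hside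
        | Sum.inl x, Sum.inr a =>
          refine ⟨⟨x, a⟩, ?_, rfl⟩
          rw [Finset.mem_sigma]
          exact ⟨Finset.mem_univ _, (memN x a).2 hs⟩
        | Sum.inr a, Sum.inl x =>
          refine ⟨⟨x, a⟩, ?_, ?_⟩
          · rw [Finset.mem_sigma]
            exact ⟨Finset.mem_univ _, (memN x a).2 hs.symm⟩
          · exact Sym2.eq_swap
  -- the set of non-maximal neighbors
  set Dx : Fin v → Finset (Fin w) :=
    fun x => (N x).filter (fun a => ∃ b ∈ N x, a < b) with hDx
  have step3 : ∀ x, (N x).card ≤ 1 + (Dx x).card := by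
    intro x
    rcases (N x).eq_empty_or_nonempty with h | h
    · simp [h, hDx]
    · have hmax := Finset.max'_mem _ h
      have : Dx x = (N x).erase ((N x).max' h) := by
        ext a
        simp only [hDx, Finset.mem_filter, Finset.mem_erase]
        constructor
        · rintro ⟨ha, b, hb, hab⟩
          exact ⟨fun hEq => absurd (hEq ▸ Finset.le_max' _ _ hb) (not_le.2 hab), ha⟩
        · rintro ⟨hne, ha⟩
          exact ⟨ha, (N x).max' h, hmax, lt_of_le_of_ne (Finset.le_max' _ _ ha) hne⟩
      rw [this, Finset.card_erase_of_mem hmax]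
      have : 1 ≤ (N x).card := Finset.card_pos.2 h
      omega
  -- the successor function
  set nxt : Fin v → Fin w → Fin w := fun x a =>
    if h : ((N x).filter (fun b => a < b)).Nonempty
    then ((N x).filter (fun b => a < b)).min' h else a with hnxt
  have nxt_spec : ∀ x a, a ∈ Dx x →
      nxt x a ∈ N x ∧ a < nxt x a ∧ ∀ d ∈ N x, a < d → ¬ d < nxt x a := by
    intro x a ha
    rw [hDx, Finset.mem_filter] at ha
    obtain ⟨haN, b, hb, hab⟩ := ha
    have hne : ((N x).filter (fun b => a < b)).Nonempty := ⟨b, Finset.mem_filter.2 ⟨hb, hab⟩⟩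
    have hval : nxt x a = ((N x).filter (fun b => a < b)).min' hne := by
      rw [hnxt]; simp [hne]
    have hmem := Finset.min'_mem _ hne
    rw [← hval, Finset.mem_filter] at hmem
    refine ⟨hmem.1, hmem.2, ?_⟩
    intro d hd had hlt
    have := Finset.min'_le _ d (Finset.mem_filter.2 ⟨hd, had⟩)
    rw [← hval] at this
    exact absurd hlt (not_lt.2 this)
  -- adjacency in aux graph
  have adjH : ∀ x a, a ∈ Dx x → (auxH N).Adj a (nxt x a) := by
    intro x a ha
    obtain ⟨h1, h2, h3⟩ := nxt_spec x a ha
    rw [hDx, Finset.mem_filter] at ha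
    refine ⟨ne_of_lt h2, x, ha.1, h1, ?_⟩
    intro d hd
    constructor
    · rintro ⟨hd1, hd2⟩; exact h3 d hd hd1 hd2
    · rintro ⟨hd1, hd2⟩; exact absurd (h2.trans (hd1.trans hd2)) (lt_irrefl a)
  -- aux graph is triangle-free
  have sorted : ∀ (p m q : Fin w) (t1 t2 t3 : Fin v), p < m → m < q →
      p ∈ N t1 → m ∈ N t1 → m ∈ N t2 → q ∈ N t2 → p ∈ N t3 → q ∈ N t3 →
      (∀ d ∈ N t3, ¬(p < d ∧ d < q)) → False := by
    intro p m q t1 t2 t3 hpm hmq h1 h2 h3 h4' h5 h6' hbet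
    have hmN3 : m ∉ N t3 := fun hm => hbet m hm ⟨hpm, hmq⟩
    have h31 : t3 ≠ t1 := fun hEq => hmN3 (hEq ▸ h2)
    have h32 : t3 ≠ t2 := fun hEq => hmN3 (hEq ▸ h3)
    by_cases h12 : t1 = t2
    · -- t1 = t2 contains p, m, q ; t3 contains p, q : 4-cycle on p,q
      subst h12
      exact F1 t1 t3 p q h31.symm (ne_of_lt (hpm.trans hmq)) h1 h4' h5 h6'
    · exact F2 t1 t2 t3 p m q h12 (Ne.symm h31) (Ne.symm h32)
        (ne_of_lt hpm) (ne_of_lt (hpm.trans hmq)) (ne_of_lt hmq)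
        h1 h2 h3 h4' h6' h5
  have hT : ∀ a b c, (auxH N).Adj a b → (auxH N).Adj a c → ¬ (auxH N).Adj b c := by
    intro a b c hab hac hbc
    obtain ⟨nab, x, hxa, hxb, hxbet⟩ := hab
    obtain ⟨nac, z, hza, hzc, hzbet⟩ := hac
    obtain ⟨nbc, y, hyb, hyc, hybet⟩ := hbc
    rcases lt_trichotomy a b with o1 | o1 | o1
    · rcases lt_trichotomy b c with o2 | o2 | o2
      · -- a < b < c : middle b, outer edge {a,c} wit z
        exact sorted a b c x y z o1 o2 hxa hxb hyb hyc hza hzc (fun d hd => (hzbet d hd).1)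
      · exact nbc o2
      · rcases lt_trichotomy a c with o3 | o3 | o3
        · -- a < c < b : middle c, outer edge {a,b} wit x
          exact sorted a c b z y x o3 o2 hza hzc hyc hyb hxa hxb (fun d hd => (hxbet d hd).1)
        · exact nac o3
        · -- c < a < b : middle a, outer edge {c,b} wit y
          exact sorted c a b z x y o3 o1 hzc hza hxa hxb hyc hyb (fun d hd => (hybet d hd).2)
    · exact nab o1
    · rcases lt_trichotomy a c with o2 | o2 | o2
      · -- b < a < c : middle a, outer {b,c} wit y
        exact sorted b a c x z y o1 o2 hxb hxa hza hzc hyb hyc (fun d hd => (hybet d hd).1)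
      · exact nac o2
      · rcases lt_trichotomy b c with o3 | o3 | o3
        · -- b < c < a : middle c, outer {b,a} wit x
          exact sorted b c a y z x o3 o2 hyb hyc hzc hza hxb hxa (fun d hd => (hxbet d hd).2)
        · exact nbc o3
        · -- c < b < a : middle b, outer {c,a} wit z
          exact sorted c b a y x z o3 o1 hyc hyb hxb hxa hzc hza (fun d hd => (hzbet d hd).2)
  -- injection into edges of aux graph
  have inj : (univ.sigma Dx).card ≤ (auxH N).edgeFinset.card := by
    refine Finset.card_le_card_of_injOn (fun p => s(p.2, nxt p.1 p.2)) ?_ ?_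
    · rintro ⟨x, a⟩ hp
      rw [Finset.mem_coe, Finset.mem_sigma] at hp
      rw [Finset.mem_coe, SimpleGraph.mem_edgeFinset, SimpleGraph.mem_edgeSet]
      exact adjH x a hp.2
    · rintro ⟨x, a⟩ h1 ⟨y, b⟩ h2 hEq
      rw [Finset.mem_coe, Finset.mem_sigma] at h1 h2
      simp only [Sym2.eq_iff] at hEq
      obtain ⟨hxN, hxlt, _⟩ := nxt_spec x a h1.2
      obtain ⟨hyN, hylt, _⟩ := nxt_spec y b h2.2
      have haN : a ∈ N x := (Finset.mem_filter.1 (hDx ▸ h1.2)).1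
      have hbN : b ∈ N y := (Finset.mem_filter.1 (hDx ▸ h2.2)).1
      rcases hEq with ⟨rfl, hn⟩ | ⟨h', h''⟩
      · by_cases hxy : x = y
        · subst hxy; rfl
        · exact absurd (F1 x y a (nxt x a) hxy (ne_of_lt hxlt) haN hxN
            hbN (hn ▸ hyN)) not_false
      · subst h'
        rw [h''] at hxlt
        exact absurd (hxlt.trans hylt) (lt_irrefl _)
  -- Mantel
  have mantel := mantel' (auxH N) hT
  rw [Fintype.card_fin] at mantel
  calc e = ∑ x : Fin v, (N x).card := by rw [he, count]
    _ ≤ ∑ x : Fin v, (1 + (Dx x).card) := Finset.sum_le_sum fun x _ => step3 x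
    _ = v + ∑ x : Fin v, (Dx x).card := by
        rw [Finset.sum_add_distrib, Finset.sum_const, Finset.card_univ, Fintype.card_fin,
          smul_eq_mul, mul_one]
    _ = v + (univ.sigma Dx).card := by rw [Finset.card_sigma]
    _ ≤ v + (auxH N).edgeFinset.card := by omega
    _ ≤ v + w ^ 2 / 4 := by omega
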